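/- Let N ≥ 1 and let I = [−1/4, 1/4]. Suppose f, g : I → ℝ are continuous and a, b ∈ ℝ^N satisfy a_σ < −|f(k)| and b_σ < −|g(k)| for all k ∈ I and all σ. Define h_{f,a}(k) = Σ_σ (−sinh f(k))/(cosh a_σ − cosh f(k)) and ε_{f,a,σ} = ∫_I (−sinh a_σ/(cosh a_σ − cosh f(k)) − 1) dk, and analogously for (g, b). If h_{f,a}(k) = h_{g,b}(k) for all k ∈ I and ε_{f,a,σ} = ε_{g,b,σ} for all σ, then f = g on I and a = b. -/

import Mathlib

open Real MeasureTheory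

noncomputable def bose (x : ℝ) : ℝ := 1 / (Real.exp x - 1)

lemma denom_pos {u c : ℝ} (h : c < -|u|) : 0 < Real.cosh c - Real.cosh u := by
  have hc : c < 0 := lt_of_lt_of_le h (by simp [abs_nonneg])
  have : |u| < |c| := by rw [abs_of_neg hc]; linarith
  linarith [Real.cosh_lt_cosh.2 this]

lemma idH {u c : ℝ} (h : c < -|u|) :
    -Real.sinh u / (Real.cosh c - Real.cosh u) = bose (u - c) - bose (-u - c) := by
  have hp : 0 < u - c := by nlinarith [neg_abs_le u, le_abs_self u]
  have hq : 0 < -u - c := by nlinarith [neg_abs_le u, le_abs_self u]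
  have e1 : Real.exp (u - c) = Real.exp u / Real.exp c := Real.exp_sub u c
  have e2 : Real.exp (-u - c) = 1 / (Real.exp u * Real.exp c) := by
    rw [show -u - c = -(u+c) by ring, Real.exp_neg, Real.exp_add]; ring
  have hEF : Real.exp u ≠ Real.exp c := fun hEq => (ne_of_gt hp) (by linarith [Real.exp_injective hEq])
  have hEF1 : Real.exp u * Real.exp c ≠ 1 := by
    rw [← Real.exp_add]
    have := Real.exp_lt_one_iff.2 (show u + c < 0 by linarith)
    linarith
  have hE := Real.exp_ne_zero u
  have hF := Real.exp_ne_zero c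
  have hkey : Real.cosh c - Real.cosh u
      = (Real.exp u - Real.exp c) * (1 - Real.exp u * Real.exp c) / (2 * Real.exp u * Real.exp c) := by
    rw [Real.cosh_eq, Real.cosh_eq, Real.exp_neg, Real.exp_neg]
    field_simp; ring
  have hEmF : Real.exp u - Real.exp c ≠ 0 := sub_ne_zero.2 hEF
  have h1m : 1 - Real.exp u * Real.exp c ≠ 0 := fun hx => hEF1 (by linarith)
  simp only [bose]
  rw [hkey, Real.sinh_eq, Real.exp_neg, e1, e2]
  field_simp
  ring

lemma idE {u c : ℝ} (h : c < -|u|) :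
    -Real.sinh c / (Real.cosh c - Real.cosh u) - 1 = bose (u - c) + bose (-u - c) := by
  have hp : 0 < u - c := by nlinarith [neg_abs_le u, le_abs_self u]
  have hq : 0 < -u - c := by nlinarith [neg_abs_le u, le_abs_self u]
  have e1 : Real.exp (u - c) = Real.exp u / Real.exp c := Real.exp_sub u c
  have e2 : Real.exp (-u - c) = 1 / (Real.exp u * Real.exp c) := by
    rw [show -u - c = -(u+c) by ring, Real.exp_neg, Real.exp_add]; ring
  have hEF : Real.exp u ≠ Real.exp c := fun hEq => (ne_of_gt hp) (by linarith [Real.exp_injective hEq])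
  have hEF1 : Real.exp u * Real.exp c ≠ 1 := by
    rw [← Real.exp_add]
    have := Real.exp_lt_one_iff.2 (show u + c < 0 by linarith)
    linarith
  have hE := Real.exp_ne_zero u
  have hF := Real.exp_ne_zero c
  have hkey : Real.cosh c - Real.cosh u
      = (Real.exp u - Real.exp c) * (1 - Real.exp u * Real.exp c) / (2 * Real.exp u * Real.exp c) := by
    rw [Real.cosh_eq, Real.cosh_eq, Real.exp_neg, Real.exp_neg]
    field_simp; ring
  have hEmF : Real.exp u - Real.exp c ≠ 0 := sub_ne_zero.2 hEF
  have h1m : 1 - Real.exp u * Real.exp c ≠ 0 := fun hx => hEF1 (by linarith)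
  simp only [bose]
  rw [hkey, Real.sinh_eq, Real.exp_neg, e1, e2]
  have h1m' : 1 - Real.exp c * Real.exp u ≠ 0 := by rwa [mul_comm]
  field_simp
  ring

lemma bose_anti {x y : ℝ} (hx : 0 < x) (hxy : x < y) : bose y < bose x := by
  have h1 : (1:ℝ) < Real.exp x := by simpa using Real.exp_lt_exp.2 hx
  have h2 : Real.exp x < Real.exp y := Real.exp_lt_exp.2 hxy
  unfold bose
  apply one_div_lt_one_div_of_lt <;> linarith

lemma bose_mono_term {x y : ℝ} (hx : 0 < x) (hy : 0 < y) :
    (bose x - bose y) * (x - y) ≤ 0 := by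
  rcases lt_trichotomy x y with h | h | h
  · nlinarith [bose_anti hx h]
  · simp [h]
  · nlinarith [bose_anti hy h]

lemma bose_mono_term_eq {x y : ℝ} (hx : 0 < x) (hy : 0 < y)
    (h : (bose x - bose y) * (x - y) = 0) : x = y := by
  rcases lt_trichotomy x y with h' | h' | h'
  · nlinarith [bose_anti hx h']
  · exact h'
  · nlinarith [bose_anti hy h']

/-- The per-pair "gradient monotonicity" expression. -/
noncomputable def pairS (u₁ c₁ u₂ c₂ : ℝ) : ℝ :=
  (-Real.sinh u₁ / (Real.cosh c₁ - Real.cosh u₁) - -Real.sinh u₂ / (Real.cosh c₂ - Real.cosh u₂)) * (u₁ - u₂)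
  - ((-Real.sinh c₁ / (Real.cosh c₁ - Real.cosh u₁) - 1) - (-Real.sinh c₂ / (Real.cosh c₂ - Real.cosh u₂) - 1)) * (c₁ - c₂)

lemma pairS_eq_boses {u₁ c₁ u₂ c₂ : ℝ} (h₁ : c₁ < -|u₁|) (h₂ : c₂ < -|u₂|) :
    pairS u₁ c₁ u₂ c₂
      = (bose (u₁ - c₁) - bose (u₂ - c₂)) * ((u₁ - c₁) - (u₂ - c₂))
        + (bose (-u₁ - c₁) - bose (-u₂ - c₂)) * ((-u₁ - c₁) - (-u₂ - c₂)) := by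
  unfold pairS
  rw [idH h₁, idH h₂, idE h₁, idE h₂]
  ring

lemma pairS_nonpos {u₁ c₁ u₂ c₂ : ℝ} (h₁ : c₁ < -|u₁|) (h₂ : c₂ < -|u₂|) :
    pairS u₁ c₁ u₂ c₂ ≤ 0 := by
  have p₁ : 0 < u₁ - c₁ := by nlinarith [neg_abs_le u₁, le_abs_self u₁]
  have q₁ : 0 < -u₁ - c₁ := by nlinarith [neg_abs_le u₁, le_abs_self u₁]
  have p₂ : 0 < u₂ - c₂ := by nlinarith [neg_abs_le u₂, le_abs_self u₂]
  have q₂ : 0 < -u₂ - c₂ := by nlinarith [neg_abs_le u₂, le_abs_self u₂]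
  rw [pairS_eq_boses h₁ h₂]
  linarith [bose_mono_term p₁ p₂, bose_mono_term q₁ q₂]

lemma pairS_eq_zero {u₁ c₁ u₂ c₂ : ℝ} (h₁ : c₁ < -|u₁|) (h₂ : c₂ < -|u₂|)
    (h : pairS u₁ c₁ u₂ c₂ = 0) : u₁ = u₂ ∧ c₁ = c₂ := by
  have p₁ : 0 < u₁ - c₁ := by nlinarith [neg_abs_le u₁, le_abs_self u₁]
  have q₁ : 0 < -u₁ - c₁ := by nlinarith [neg_abs_le u₁, le_abs_self u₁]
  have p₂ : 0 < u₂ - c₂ := by nlinarith [neg_abs_le u₂, le_abs_self u₂]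
  have q₂ : 0 < -u₂ - c₂ := by nlinarith [neg_abs_le u₂, le_abs_self u₂]
  rw [pairS_eq_boses h₁ h₂] at h
  have t1 := bose_mono_term p₁ p₂
  have t2 := bose_mono_term q₁ q₂
  have e1 : (bose (u₁ - c₁) - bose (u₂ - c₂)) * ((u₁ - c₁) - (u₂ - c₂)) = 0 := by linarith
  have e2 : (bose (-u₁ - c₁) - bose (-u₂ - c₂)) * ((-u₁ - c₁) - (-u₂ - c₂)) = 0 := by linarith
  have := bose_mono_term_eq p₁ p₂ e1
  have := bose_mono_term_eq q₁ q₂ e2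
  constructor <;> linarith

lemma pairS_def (u₁ c₁ u₂ c₂ : ℝ) : pairS u₁ c₁ u₂ c₂ =
  (-Real.sinh u₁ / (Real.cosh c₁ - Real.cosh u₁) - -Real.sinh u₂ / (Real.cosh c₂ - Real.cosh u₂)) * (u₁ - u₂)
  - ((-Real.sinh c₁ / (Real.cosh c₁ - Real.cosh u₁) - 1) - (-Real.sinh c₂ / (Real.cosh c₂ - Real.cosh u₂) - 1)) * (c₁ - c₂) := rfl

set_option maxHeartbeats 1000000 in
theorem stationary_params_injective (N : ℕ) (hN : 1 ≤ N)
    (f g : ℝ → ℝ)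
    (hf : ContinuousOn f (Set.Icc (-(1:ℝ)/4) (1/4)))
    (hg : ContinuousOn g (Set.Icc (-(1:ℝ)/4) (1/4)))
    (a b : Fin N → ℝ)
    (ha : ∀ k ∈ Set.Icc (-(1:ℝ)/4) (1/4), ∀ σ, a σ < -|f k|)
    (hb : ∀ k ∈ Set.Icc (-(1:ℝ)/4) (1/4), ∀ σ, b σ < -|g k|)
    (hh : ∀ k ∈ Set.Icc (-(1:ℝ)/4) (1/4),
      ∑ σ, (-Real.sinh (f k)) / (Real.cosh (a σ) - Real.cosh (f k))
        = ∑ σ, (-Real.sinh (g k)) / (Real.cosh (b σ) - Real.cosh (g k)))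
    (hε : ∀ σ,
      ∫ k in Set.Icc (-(1:ℝ)/4) (1/4),
          (-Real.sinh (a σ) / (Real.cosh (a σ) - Real.cosh (f k)) - 1)
        = ∫ k in Set.Icc (-(1:ℝ)/4) (1/4),
          (-Real.sinh (b σ) / (Real.cosh (b σ) - Real.cosh (g k)) - 1)) :
    (∀ k ∈ Set.Icc (-(1:ℝ)/4) (1/4), f k = g k) ∧ a = b := by
  set I : Set ℝ := Set.Icc (-(1:ℝ)/4) (1/4) with hI
  -- the per-σ energy integrands
  set Ef : Fin N → ℝ → ℝ := fun σ k => -Real.sinh (a σ) / (Real.cosh (a σ) - Real.cosh (f k)) - 1 with hEf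
  set Eg : Fin N → ℝ → ℝ := fun σ k => -Real.sinh (b σ) / (Real.cosh (b σ) - Real.cosh (g k)) - 1 with hEg
  set S : ℝ → ℝ := fun k => ∑ σ, pairS (f k) (a σ) (g k) (b σ) with hS
  have hk0 : (0:ℝ) ∈ I := by constructor <;> norm_num
  -- continuity of denominators etc.
  have hconf : ∀ σ, ContinuousOn (fun k => Real.cosh (a σ) - Real.cosh (f k)) I :=
    fun σ => (continuousOn_const.sub (Real.continuous_cosh.comp_continuousOn hf))
  have hcong : ∀ σ, ContinuousOn (fun k => Real.cosh (b σ) - Real.cosh (g k)) I :=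
    fun σ => (continuousOn_const.sub (Real.continuous_cosh.comp_continuousOn hg))
  have hEfc : ∀ σ, ContinuousOn (Ef σ) I := by
    intro σ
    exact (continuousOn_const.div (hconf σ) (fun k hk => ne_of_gt (denom_pos (ha k hk σ)))).sub continuousOn_const
  have hEgc : ∀ σ, ContinuousOn (Eg σ) I := by
    intro σ
    exact (continuousOn_const.div (hcong σ) (fun k hk => ne_of_gt (denom_pos (hb k hk σ)))).sub continuousOn_const
  have hHfc : ∀ σ, ContinuousOn (fun k => -Real.sinh (f k) / (Real.cosh (a σ) - Real.cosh (f k))) I := by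
    intro σ
    exact ((Real.continuous_sinh.comp_continuousOn hf).neg).div (hconf σ)
      (fun k hk => ne_of_gt (denom_pos (ha k hk σ)))
  have hHgc : ∀ σ, ContinuousOn (fun k => -Real.sinh (g k) / (Real.cosh (b σ) - Real.cosh (g k))) I := by
    intro σ
    exact ((Real.continuous_sinh.comp_continuousOn hg).neg).div (hcong σ)
      (fun k hk => ne_of_gt (denom_pos (hb k hk σ)))
  have hSc : ContinuousOn S I := by
    apply continuousOn_finset_sum
    intro σ _
    simp only [pairS_def]
    exact (((hHfc σ).sub (hHgc σ)).mul (hf.sub hg)).sub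
      (((hEfc σ).sub (hEgc σ)).mul continuousOn_const)
  -- S ≤ 0 on I
  have hSnonpos : ∀ k ∈ I, S k ≤ 0 := by
    intro k hk
    apply Finset.sum_nonpos
    intro σ _
    exact pairS_nonpos (ha k hk σ) (hb k hk σ)
  -- pointwise rewriting of S using hh
  have hSalt : ∀ k ∈ I, S k = ∑ σ, (Eg σ k - Ef σ k) * (a σ - b σ) := by
    intro k hk
    have h0 := hh k hk
    simp only [hS, pairS_def]
    rw [Finset.sum_sub_distrib, ← Finset.sum_mul, Finset.sum_sub_distrib, h0]
    rw [Finset.sum_congr rfl (fun σ _ => by ring : ∀ σ ∈ Finset.univ,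
      ((-Real.sinh (a σ) / (Real.cosh (a σ) - Real.cosh (f k)) - 1) -
        (-Real.sinh (b σ) / (Real.cosh (b σ) - Real.cosh (g k)) - 1)) * (a σ - b σ)
        = -((Eg σ k - Ef σ k) * (a σ - b σ)))]
    rw [Finset.sum_neg_distrib]
    ring
  -- integrability
  have hIntf : ∀ σ, IntegrableOn (Ef σ) I := fun σ => (hEfc σ).integrableOn_Icc
  have hIntg : ∀ σ, IntegrableOn (Eg σ) I := fun σ => (hEgc σ).integrableOn_Icc
  -- integral of S is zero
  have hSint : ∫ k in I, S k = 0 := by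
    rw [setIntegral_congr_fun measurableSet_Icc hSalt]
    rw [integral_finset_sum]
    · apply Finset.sum_eq_zero
      intro σ _
      have : ∫ k in I, (Eg σ k - Ef σ k) * (a σ - b σ)
          = ((∫ k in I, Eg σ k) - ∫ k in I, Ef σ k) * (a σ - b σ) := by
        rw [← integral_sub (hIntg σ) (hIntf σ), ← integral_mul_const]
      rw [this, hε σ]
      ring
    · intro σ _
      exact (((hEgc σ).sub (hEfc σ)).mul continuousOn_const).integrableOn_Icc
  -- S = 0 on I
  have hSzero : ∀ k ∈ I, S k = 0 := by
    have hne : (-(1:ℝ)/4) ≠ 1/4 := by norm_num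
    have hint : IntegrableOn S I := hSc.integrableOn_Icc
    have hae : (fun k => -S k) =ᵐ[volume.restrict I] 0 := by
      rw [← integral_eq_zero_iff_of_nonneg_ae]
      · simp [integral_neg, hSint]
      · filter_upwards [ae_restrict_mem measurableSet_Icc] with k hk
        simp only [Pi.zero_apply, neg_nonneg] at *
        exact hSnonpos k hk
      · exact hint.neg
    have : Set.EqOn (fun k => -S k) 0 I :=
      Measure.eqOn_Icc_of_ae_eq volume hne hae hSc.neg continuousOn_const
    intro k hk
    have := this hk
    simp at this
    linarith [this]
  -- conclude
  have hpair : ∀ k ∈ I, ∀ σ, f k = g k ∧ a σ = b σ := by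
    intro k hk σ
    apply pairS_eq_zero (ha k hk σ) (hb k hk σ)
    have hz := hSzero k hk
    have hnp : ∀ σ' ∈ Finset.univ, pairS (f k) (a σ') (g k) (b σ') ≤ 0 :=
      fun σ' _ => pairS_nonpos (ha k hk σ') (hb k hk σ')
    have := (Finset.sum_eq_zero_iff_of_nonpos hnp).1 hz σ (Finset.mem_univ σ)
    exact this
  refine ⟨fun k hk => (hpair k hk ⟨0, hN⟩).1, funext fun σ => (hpair 0 hk0 σ).2⟩
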